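/- Let ρ : U → ℝ satisfy e^{−C_r}/|U| ≤ ρ ≤ e^{C_r}/|U| and |log ρ(x) − log ρ(y)| ≤ C_r γ^{s(x,y)} on an interval U of length |U| > 0, and let 0 < r < e^{−C_r}/|U|·|U| = e^{−C_r} (so ρ − r > 0). Then for all x, y ∈ U: |log(ρ(x) − r) − log(ρ(y) − r)| ≤ C_r γ^{s(x,y)} + (r C_r e^{C_r}/((1 − r e^{C_r})|U|)) γ^{s(x,y)}. -/

import Mathlib

/-- If `0 < m ≤ u` and `m ≤ v`, then `|log u - log v| ≤ |u - v| / m`. -/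
lemma logdiff_le {u v m : ℝ} (hm : 0 < m) (hu : m ≤ u) (hv : m ≤ v) :
    |Real.log u - Real.log v| ≤ |u - v| / m := by
  wlog h : v ≤ u generalizing u v
  · rw [abs_sub_comm, abs_sub_comm u v]; exact this hv hu (le_of_not_ge h)
  have hv0 : 0 < v := lt_of_lt_of_le hm hv
  have hu0 : 0 < u := lt_of_lt_of_le hm hu
  rw [abs_of_nonneg (sub_nonneg.2 (Real.log_le_log hv0 h)),
    abs_of_nonneg (sub_nonneg.2 h)]
  have := Real.log_le_sub_one_of_pos (show 0 < u / v by positivity)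
  rw [Real.log_div hu0.ne' hv0.ne'] at this
  calc Real.log u - Real.log v ≤ u / v - 1 := this
    _ = (u - v) / v := by field_simp
    _ ≤ (u - v) / m := by
        apply div_le_div_of_nonneg_left (sub_nonneg.2 h) hm hv

/-- For positive `u, v`, `|u - v| ≤ max u v * |log u - log v|`. -/
lemma diff_le_logdiff {u v : ℝ} (hu : 0 < u) (hv : 0 < v) :
    |u - v| ≤ max u v * |Real.log u - Real.log v| := by
  wlog h : v ≤ u generalizing u v
  · rw [abs_sub_comm, abs_sub_comm (Real.log u), max_comm]
    exact this hv hu (le_of_not_ge h)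
  rw [abs_of_nonneg (sub_nonneg.2 h),
    abs_of_nonneg (sub_nonneg.2 (Real.log_le_log hv h)), max_eq_left h]
  have := Real.log_le_sub_one_of_pos (show 0 < v / u by positivity)
  rw [Real.log_div hv.ne' hu.ne'] at this
  have h2 := mul_le_mul_of_nonneg_left this hu.le
  have h3 : u * (v / u - 1) = v - u := by field_simp
  nlinarith

/-- Key estimate in the splitting lemma: subtracting a small constant `r` from a regular
density `ρ` on the magnet `U = [a,b]` keeps the log-regularity with a slightly worse
constant. -/
theorem stmt19 (a b Cr γ r : ℝ) (hab : a < b) (hsub : Set.Icc a b ⊆ Set.Icc (0:ℝ) 1)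
    (hCr : 0 < Cr) (hγ : γ ∈ Set.Ioo (0:ℝ) 1)
    (hr : 0 < r) (hr' : r < Real.exp (-Cr))
    (ρ : ℝ → ℝ) (s : ℝ → ℝ → ℕ)
    (hbound : ∀ x ∈ Set.Icc a b,
      Real.exp (-Cr) / (b - a) ≤ ρ x ∧ ρ x ≤ Real.exp Cr / (b - a))
    (hreg : ∀ x ∈ Set.Icc a b, ∀ y ∈ Set.Icc a b,
      |Real.log (ρ x) - Real.log (ρ y)| ≤ Cr * γ ^ s x y) :
    ∀ x ∈ Set.Icc a b, ∀ y ∈ Set.Icc a b,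
      |Real.log (ρ x - r) - Real.log (ρ y - r)| ≤
        Cr * γ ^ s x y +
          r * Cr * Real.exp Cr / ((1 - r * Real.exp Cr) * (b - a)) * γ ^ s x y := by
  intro x hx y hy
  set L := b - a with hL
  have hL0 : 0 < L := sub_pos.2 hab
  have hL1 : L ≤ 1 := by
    have ha := hsub (Set.left_mem_Icc.2 hab.le)
    have hb := hsub (Set.right_mem_Icc.2 hab.le)
    simp only [Set.mem_Icc] at ha hb
    linarith [ha.1, hb.2]
  have hre : r * Real.exp Cr < 1 := by
    have := mul_lt_mul_of_pos_right hr' (Real.exp_pos Cr)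
    rwa [← Real.exp_add, neg_add_cancel, Real.exp_zero] at this
  have hre0 : 0 < 1 - r * Real.exp Cr := by linarith
  -- pointwise facts
  have key : ∀ z ∈ Set.Icc a b, Real.exp (-Cr) ≤ ρ z ∧ ρ z ≤ Real.exp Cr / L ∧
      1 - r * Real.exp Cr ≤ 1 - r / ρ z ∧ 0 < 1 - r / ρ z ∧
      Real.log (ρ z - r) = Real.log (ρ z) + Real.log (1 - r / ρ z) ∧
      1 / ρ z ≤ L * Real.exp Cr := by
    intro z hz
    obtain ⟨h1, h2⟩ := hbound z hz
    have hlow : Real.exp (-Cr) ≤ ρ z := by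
      refine le_trans ?_ h1
      rw [le_div_iff₀ hL0]
      nlinarith [Real.exp_pos (-Cr)]
    have hz0 : 0 < ρ z := lt_of_lt_of_le (Real.exp_pos _) hlow
    have hrz : r / ρ z ≤ r * Real.exp Cr := by
      rw [div_le_iff₀ hz0]
      calc r = r * Real.exp Cr * Real.exp (-Cr) := by
              rw [mul_assoc, ← Real.exp_add, add_neg_cancel, Real.exp_zero, mul_one]
        _ ≤ r * Real.exp Cr * ρ z := by
              apply mul_le_mul_of_nonneg_left hlow
              positivity
    have h3 : 1 - r * Real.exp Cr ≤ 1 - r / ρ z := by linarith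
    have h4 : 0 < 1 - r / ρ z := lt_of_lt_of_le hre0 h3
    refine ⟨hlow, h2, h3, h4, ?_, ?_⟩
    · rw [← Real.log_mul hz0.ne' h4.ne']
      congr 1
      field_simp
    · rw [div_le_iff₀ hz0]
      calc (1:ℝ) = L * Real.exp Cr * (Real.exp (-Cr) / L) := by
            rw [Real.exp_neg]
            field_simp
        _ ≤ L * Real.exp Cr * ρ z := by
            apply mul_le_mul_of_nonneg_left h1
            positivity
  obtain ⟨hx1, hx2, hx3, hx4, hx5, hx6⟩ := key x hx
  obtain ⟨hy1, hy2, hy3, hy4, hy5, hy6⟩ := key y hy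
  have hρx : 0 < ρ x := lt_of_lt_of_le (Real.exp_pos _) hx1
  have hρy : 0 < ρ y := lt_of_lt_of_le (Real.exp_pos _) hy1
  have ht0 : 0 < γ ^ s x y := pow_pos hγ.1 _
  have ht1 : γ ^ s x y ≤ 1 := pow_le_one₀ hγ.1.le hγ.2.le
  rw [hx5, hy5]
  have step1 : |Real.log (ρ x) + Real.log (1 - r / ρ x) -
      (Real.log (ρ y) + Real.log (1 - r / ρ y))| ≤
      |Real.log (ρ x) - Real.log (ρ y)| +
      |Real.log (1 - r / ρ x) - Real.log (1 - r / ρ y)| := by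
    have := abs_sub (Real.log (ρ x) - Real.log (ρ y))
      (Real.log (1 - r / ρ y) - Real.log (1 - r / ρ x))
    rw [show Real.log (ρ x) + Real.log (1 - r / ρ x) -
      (Real.log (ρ y) + Real.log (1 - r / ρ y)) =
      (Real.log (ρ x) - Real.log (ρ y)) -
      (Real.log (1 - r / ρ y) - Real.log (1 - r / ρ x)) by ring]
    calc _ ≤ |Real.log (ρ x) - Real.log (ρ y)| +
        |Real.log (1 - r / ρ y) - Real.log (1 - r / ρ x)| := abs_sub _ _
      _ = _ := by rw [abs_sub_comm (Real.log (1 - r / ρ y))]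
  -- second term bound
  have hinv : |1 / ρ x - 1 / ρ y| ≤ L * Real.exp Cr * (Cr * γ ^ s x y) := by
    have h := diff_le_logdiff (show 0 < 1 / ρ x by positivity)
      (show 0 < 1 / ρ y by positivity)
    have hlog : |Real.log (1 / ρ x) - Real.log (1 / ρ y)| =
        |Real.log (ρ x) - Real.log (ρ y)| := by
      rw [Real.log_div one_ne_zero hρx.ne', Real.log_div one_ne_zero hρy.ne',
        Real.log_one]
      rw [show 0 - Real.log (ρ x) - (0 - Real.log (ρ y)) =
        -(Real.log (ρ x) - Real.log (ρ y)) by ring, abs_neg]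
    rw [hlog] at h
    calc |1 / ρ x - 1 / ρ y| ≤ max (1 / ρ x) (1 / ρ y) *
          |Real.log (ρ x) - Real.log (ρ y)| := h
      _ ≤ L * Real.exp Cr * (Cr * γ ^ s x y) := by
          apply mul_le_mul (max_le hx6 hy6) (hreg x hx y hy) (abs_nonneg _)
          positivity
  have step2 : |Real.log (1 - r / ρ x) - Real.log (1 - r / ρ y)| ≤
      r * Cr * Real.exp Cr / ((1 - r * Real.exp Cr) * L) * γ ^ s x y := by
    have h := logdiff_le hre0 hx3 hy3
    have hd : |1 - r / ρ x - (1 - r / ρ y)| = r * |1 / ρ x - 1 / ρ y| := by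
      rw [show 1 - r / ρ x - (1 - r / ρ y) = -(r * (1 / ρ x - 1 / ρ y)) by
        field_simp; ring, abs_neg, abs_mul, abs_of_pos hr]
    rw [hd] at h
    calc |Real.log (1 - r / ρ x) - Real.log (1 - r / ρ y)|
        ≤ r * |1 / ρ x - 1 / ρ y| / (1 - r * Real.exp Cr) := h
      _ ≤ r * (L * Real.exp Cr * (Cr * γ ^ s x y)) / (1 - r * Real.exp Cr) := by
          gcongr
      _ ≤ r * Cr * Real.exp Cr / ((1 - r * Real.exp Cr) * L) * γ ^ s x y := by
          rw [div_mul_eq_mul_div, div_le_div_iff₀ (by positivity) (by positivity)]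
          have hLL : L * L ≤ 1 := by nlinarith
          have hA : (0:ℝ) ≤ r * Cr * Real.exp Cr * γ ^ s x y * (1 - r * Real.exp Cr) := by
            positivity
          nlinarith [mul_le_mul_of_nonneg_left hLL hA]
  calc _ ≤ |Real.log (ρ x) - Real.log (ρ y)| +
      |Real.log (1 - r / ρ x) - Real.log (1 - r / ρ y)| := step1
    _ ≤ Cr * γ ^ s x y +
        r * Cr * Real.exp Cr / ((1 - r * Real.exp Cr) * L) * γ ^ s x y :=
      add_le_add (hreg x hx y hy) step2
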